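/- Let G consist of an n-cycle v_1,...,v_n plus two vertices v and w each adjacent to all v_i (with v, w nonadjacent). If v_i and v_j are cycle vertices whose distance on the cycle C_n exceeds 3, then d_G(v_i, v_j) = 2 and the only geodesics between v_i and v_j in G are the paths v_i, v, v_j and v_i, w, v_j. -/

import Mathlib

namespace RC

variable {V : Type*}

/-- A walk is rainbow under edge coloring `c` if its edges receive pairwise distinct colors. -/
def IsRainbow {G : SimpleGraph V} (c : Sym2 V → ℕ) {u v : V} (p : G.Walk u v) : Prop :=
  (p.edges.map c).Nodup

/-- `c` is a rainbow coloring: every pair of vertices is joined by a rainbow path. -/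
def IsRainbowColoring (G : SimpleGraph V) (c : Sym2 V → ℕ) : Prop :=
  ∀ u v : V, ∃ p : G.Walk u v, p.IsPath ∧ IsRainbow c p

/-- `c` is a strong rainbow coloring: every pair of vertices is joined by a rainbow geodesic. -/
def IsStrongRainbowColoring (G : SimpleGraph V) (c : Sym2 V → ℕ) : Prop :=
  ∀ u v : V, ∃ p : G.Walk u v, p.IsPath ∧ p.length = G.dist u v ∧ IsRainbow c p

/-- `c` uses at most `k` colors (namely `0, …, k-1`) on the edges of `G`. -/
def UsesColors (G : SimpleGraph V) (c : Sym2 V → ℕ) (k : ℕ) : Prop :=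
  ∀ e ∈ G.edgeSet, c e < k

/-- The rainbow connection number `rc(G)`. -/
noncomputable def rc (G : SimpleGraph V) : ℕ :=
  sInf {k | ∃ c : Sym2 V → ℕ, UsesColors G c k ∧ IsRainbowColoring G c}

/-- The strong rainbow connection number `src(G)`. -/
noncomputable def src (G : SimpleGraph V) : ℕ :=
  sInf {k | ∃ c : Sym2 V → ℕ, UsesColors G c k ∧ IsStrongRainbowColoring G c}

/-- Vertices of `H_n`: cycle vertices plus `v` (`true`) and `w` (`false`). -/
abbrev HV (n : ℕ) := Fin n ⊕ Bool

def hRel (n : ℕ) : HV n → HV n → Prop := fun x y =>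
  match x, y with
  | Sum.inl i, Sum.inl j => (i.val + 1) % n = j.val
  | Sum.inl _, Sum.inr _ => True
  | _, _ => False

/-- The graph `H_n`: an `n`-cycle plus two vertices `v, w` each adjacent to all cycle
vertices (and not to each other). -/
def HG (n : ℕ) : SimpleGraph (HV n) := SimpleGraph.fromRel (hRel n)

lemma sub_val_one {m : ℕ} {a b : Fin (m + 1)} (hm : 1 ≤ m)
    (h : (a.val + 1) % (m + 1) = b.val) : (b - a).val = 1 := by
  have hb : b = a + 1 := by
    apply Fin.ext
    rw [Fin.add_def, Fin.val_one']
    rw [Nat.mod_eq_of_lt (by omega : 1 < m + 1)]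
    exact h.symm
  have : b - a = 1 := by rw [hb]; exact add_sub_cancel_left a 1
  rw [this, Fin.val_one', Nat.mod_eq_of_lt (by omega)]

lemma hg_adj_inl_inl {n : ℕ} {a b : Fin n} (h : (HG n).Adj (Sum.inl a) (Sum.inl b)) :
    (SimpleGraph.cycleGraph n).Adj a b := by
  obtain ⟨m, rfl⟩ : ∃ m, n = m + 1 := ⟨n - 1, by have := a.pos; omega⟩
  have hne : a ≠ b := fun e => h.ne (congrArg Sum.inl e)
  have hm : 1 ≤ m := by
    have h1 := a.is_lt; have h2 := b.is_lt
    have h3 : a.val ≠ b.val := fun e => hne (Fin.ext e)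
    omega
  rw [SimpleGraph.cycleGraph_adj']
  rw [HG, SimpleGraph.fromRel_adj] at h
  obtain ⟨-, h | h⟩ := h <;> simp only [hRel] at h
  · exact Or.inr (sub_val_one hm h)
  · exact Or.inl (sub_val_one hm h)

lemma hg_adj_inl_inr {n : ℕ} (k : Fin n) (b : Bool) :
    (HG n).Adj (Sum.inl k) (Sum.inr b) := by
  rw [HG, SimpleGraph.fromRel_adj]
  exact ⟨by simp, Or.inl trivial⟩

/-- In `H_n`, if two cycle vertices are at distance more than `3` along the cycle, then
their distance in `H_n` is `2` and the only geodesics between them are the paths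
through `v` and through `w`. -/
theorem stmt_13 (n : ℕ) (i j : Fin n)
    (hfar : 3 < (SimpleGraph.cycleGraph n).dist i j) :
    (HG n).dist (Sum.inl i) (Sum.inl j) = 2 ∧
      ∀ p : (HG n).Walk (Sum.inl i) (Sum.inl j), p.IsPath → p.length = 2 →
        p.support = [Sum.inl i, Sum.inr true, Sum.inl j] ∨
        p.support = [Sum.inl i, Sum.inr false, Sum.inl j] := by
  have hne : i ≠ j := by
    rintro rfl
    simp [SimpleGraph.dist_self] at hfar
  have hnadj : ¬ (SimpleGraph.cycleGraph n).Adj i j := fun h => by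
    have := SimpleGraph.dist_eq_one_iff_adj.mpr h
    omega
  have hnocommon : ∀ k : Fin n, ¬ ((SimpleGraph.cycleGraph n).Adj i k ∧
      (SimpleGraph.cycleGraph n).Adj k j) := by
    rintro k ⟨h1, h2⟩
    have := SimpleGraph.dist_le (SimpleGraph.Walk.cons h1 (SimpleGraph.Walk.cons h2 SimpleGraph.Walk.nil))
    simp at this
    omega
  have hw : (HG n).Walk (Sum.inl i) (Sum.inl j) :=
    SimpleGraph.Walk.cons (hg_adj_inl_inr i true)
      (SimpleGraph.Walk.cons (hg_adj_inl_inr j true).symm SimpleGraph.Walk.nil)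
  have hle : (HG n).dist (Sum.inl i) (Sum.inl j) ≤ 2 := by
    have := SimpleGraph.dist_le (SimpleGraph.Walk.cons (hg_adj_inl_inr i true)
      (SimpleGraph.Walk.cons (hg_adj_inl_inr j true).symm SimpleGraph.Walk.nil))
    simpa using this
  have hd0 : (HG n).dist (Sum.inl i) (Sum.inl j) ≠ 0 := by
    intro h0
    rcases SimpleGraph.dist_eq_zero_iff_eq_or_not_reachable.mp h0 with e | hr
    · exact hne (Sum.inl.inj e)
    · exact hr ⟨hw⟩
  have hd1 : (HG n).dist (Sum.inl i) (Sum.inl j) ≠ 1 := fun h =>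
    hnadj (hg_adj_inl_inl (SimpleGraph.dist_eq_one_iff_adj.mp h))
  refine ⟨by omega, ?_⟩
  intro p hp hlen
  cases p with
  | nil => simp at hlen
  | @cons _ y _ h1 q =>
    cases q with
    | nil => simp at hlen
    | cons h2 q' =>
      cases q' with
      | cons h3 q'' => simp at hlen
      | nil =>
        cases y with
        | inl k => exact absurd ⟨hg_adj_inl_inl h1, hg_adj_inl_inl h2⟩ (hnocommon k)
        | inr b =>
          cases b with
          | true => left; simp
          | false => right; simp

end RC
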